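/- AdaHedge regret bound (equation (3.2)): Let K ≥ 2, T ≥ 1, and let ℓ_k^{(t)} ≥ 0 for k = 1,…,K and t = 1,…,T be the expert losses. Run AdaHedge (defined in the context) to produce hedge losses h^{(1)}, …, h^{(T)} and set H^{(T)} = ∑_{t=1}^T h^{(t)}. With L_*^{(T)} = min_k L_k^{(T)}, L_+^{(T)} = ∑_{t=1}^T max_k ℓ_k^{(t)}, L_−^{(T)} = ∑_{t=1}^T min_k ℓ_k^{(t)}, s^{(t)} = max_k ℓ_k^{(t)} − min_k ℓ_k^{(t)} and S^{(T)} = max_{1≤t≤T} s^{(t)}, it holds that H^{(T)} ≤ L_*^{(T)} + 2·( S^{(T)}·(ln K)·(L_+^{(T)} − L_*^{(T)})·(L_*^{(T)} − L_−^{(T)}) / (L_+^{(T)} − L_−^{(T)}) )^{1/2} + S^{(T)}·((16/3)·ln K + 2), where the fraction is interpreted as 0 when L_+^{(T)} = L_−^{(T)}. -/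

import Mathlib

open Finset

/-- Cumulative loss of expert `k` after `t` rounds: `L_k^{(t)} = ∑_{s<t} ℓ_k^{(s)}`. -/
noncomputable def cumLoss (K : ℕ) (l : ℕ → Fin K → ℝ) (t : ℕ) (k : Fin K) : ℝ :=
  ∑ s ∈ Finset.range t, l s k

/- AdaHedge weights in round `t`, given the cumulative mixability gap `Δ` so far.
If `Δ > 0`, these are the exponential weights with learning rate `η = ln K / Δ`;
if `Δ ≤ 0` (i.e. `Δ = 0`, corresponding to `η = ∞`), the weight is uniform on the
set of minimizers of the cumulative loss. -/
open Classical in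
noncomputable def ahWeight (K : ℕ) (l : ℕ → Fin K → ℝ) (Δ : ℝ) (t : ℕ) (k : Fin K) : ℝ :=
  if 0 < Δ then
    Real.exp (-(Real.log K / Δ) * cumLoss K l t k) /
      ∑ j : Fin K, Real.exp (-(Real.log K / Δ) * cumLoss K l t j)
  else
    if cumLoss K l t k = ⨅ j, cumLoss K l t j then
      1 / ((Finset.univ.filter fun j : Fin K =>
        cumLoss K l t j = ⨅ j', cumLoss K l t j').card : ℝ)
    else 0

/-- Hedge loss in round `t`: `h^{(t)} = ∑ k, w_k^{(t)} ℓ_k^{(t)}`. -/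
noncomputable def ahHedgeLoss (K : ℕ) (l : ℕ → Fin K → ℝ) (Δ : ℝ) (t : ℕ) : ℝ :=
  ∑ k : Fin K, ahWeight K l Δ t k * l t k

/-- Mix loss in round `t`: `m^{(t)} = −(1/η)·ln(∑ k, w_k^{(t)} exp(−η ℓ_k^{(t)}))`
with `η = ln K / Δ` when `Δ > 0`, and `min_k L_k^{(t)} − min_k L_k^{(t−1)}` when
`Δ = 0` (corresponding to `η = ∞`). -/
noncomputable def ahMixLoss (K : ℕ) (l : ℕ → Fin K → ℝ) (Δ : ℝ) (t : ℕ) : ℝ :=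
  if 0 < Δ then
    -(Δ / Real.log K) *
      Real.log (∑ k : Fin K, ahWeight K l Δ t k * Real.exp (-(Real.log K / Δ) * l t k))
  else (⨅ k, cumLoss K l (t + 1) k) - ⨅ k, cumLoss K l t k

/-- The AdaHedge cumulative mixability gap: `Δ^{(0)} = 0` and
`Δ^{(t+1)} = Δ^{(t)} + (h^{(t)} − m^{(t)})`. -/
noncomputable def ahDelta (K : ℕ) (l : ℕ → Fin K → ℝ) : ℕ → ℝ
  | 0 => 0
  | t + 1 =>
    ahDelta K l t +
      (ahHedgeLoss K l (ahDelta K l t) t - ahMixLoss K l (ahDelta K l t) t)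



open Finset

/-- Master exponential inequality: `2 e^y (3 - y) ≤ y² + 4y + 6` for all real `y`. -/
lemma ah_exp_master (y : ℝ) : 2 * Real.exp y * (3 - y) ≤ y ^ 2 + 4 * y + 6 := by
  -- consider g y = y^2+4y+6 - 2 e^y (3-y); g'' ≥ 0, g'(0)=0, g(0)=0
  set g : ℝ → ℝ := fun y => y ^ 2 + 4 * y + 6 - 2 * Real.exp y * (3 - y) with hg
  set g' : ℝ → ℝ := fun y => 2 * y + 4 - 2 * Real.exp y * (2 - y) with hg'
  have hdg : ∀ x, HasDerivAt g (g' x) x := by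
    intro x
    have h1 : HasDerivAt (fun y : ℝ => 2 * Real.exp y * (3 - y))
        (2 * Real.exp x * (3 - x) + 2 * Real.exp x * (-1)) x := by
      have := ((Real.hasDerivAt_exp x).const_mul 2).mul ((hasDerivAt_id x).const_sub 3)
      exact this.congr_deriv (by simp only [id])
    have h2 : HasDerivAt (fun y : ℝ => y ^ 2 + 4 * y + 6) (2 * x + 4) x := by
      have := ((hasDerivAt_pow 2 x).add ((hasDerivAt_id x).const_mul 4)).add_const 6
      exact this.congr_deriv (by norm_num)
    have := h2.sub h1
    exact this.congr_deriv (by simp only [hg']; ring)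
  have hdg' : ∀ x, HasDerivAt g' (2 - 2 * Real.exp x * (1 - x)) x := by
    intro x
    have h1 : HasDerivAt (fun y : ℝ => 2 * Real.exp y * (2 - y))
        (2 * Real.exp x * (2 - x) + 2 * Real.exp x * (-1)) x := by
      have := ((Real.hasDerivAt_exp x).const_mul 2).mul ((hasDerivAt_id x).const_sub 2)
      exact this.congr_deriv (by simp only [id])
    have h2 : HasDerivAt (fun y : ℝ => 2 * y + 4) 2 x := by
      have := ((hasDerivAt_id x).const_mul 2).add_const 4
      exact this.congr_deriv (by ring)
    have := h2.sub h1
    exact this.congr_deriv (by ring)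
  have hg'mono : Monotone g' := by
    apply monotone_of_deriv_nonneg (fun x => (hdg' x).differentiableAt)
    intro x
    rw [(hdg' x).deriv]
    have : Real.exp x * (1 - x) ≤ 1 := by
      rcases le_or_gt x 1 with hx | hx
      · have h := Real.add_one_le_exp (-x)
        calc Real.exp x * (1 - x) ≤ Real.exp x * Real.exp (-x) := by
              apply mul_le_mul_of_nonneg_left _ (Real.exp_nonneg x)
              linarith
          _ = 1 := by rw [← Real.exp_add]; simp
      · nlinarith [Real.exp_pos x]
    linarith
  have hg'0 : g' 0 = 0 := by simp [hg']; norm_num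
  have hkey : ∀ x, 0 ≤ g x := by
    intro x
    have hgd : Differentiable ℝ g := fun x => (hdg x).differentiableAt
    have hg0 : g 0 = 0 := by simp [hg]; norm_num
    rcases le_or_gt 0 x with hx | hx
    · have : MonotoneOn g (Set.Ici 0) := by
        apply monotoneOn_of_deriv_nonneg (convex_Ici 0) hgd.continuous.continuousOn
          hgd.differentiableOn
        intro z hz
        rw [(hdg z).deriv]
        rw [interior_Ici] at hz
        have := hg'mono (le_of_lt hz)
        rw [hg'0] at this; exact this
      have := this (Set.self_mem_Ici) (Set.mem_Ici.mpr hx) hx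
      rw [hg0] at this; exact this
    · have : AntitoneOn g (Set.Iic 0) := by
        apply antitoneOn_of_deriv_nonpos (convex_Iic 0) hgd.continuous.continuousOn
          hgd.differentiableOn
        intro z hz
        rw [(hdg z).deriv]
        rw [interior_Iic] at hz
        have := hg'mono (le_of_lt hz)
        rw [hg'0] at this; exact this
      have := this (Set.mem_Iic.mpr hx.le) (Set.self_mem_Iic) hx.le
      rw [hg0] at this; exact this
    
  have := hkey y
  simp only [hg] at this
  linarith

/-- pointwise bound: for `y ≤ c < 3`, `e^y ≤ 1 + y + 3/(2(3-c)) y²`. -/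
lemma ah_exp_quad {y c : ℝ} (hyc : y ≤ c) (hc : c < 3) :
    Real.exp y ≤ 1 + y + 3 / (2 * (3 - c)) * y ^ 2 := by
  have h3y : 0 < 3 - y := by linarith
  have h3c : 0 < 3 - c := by linarith
  have hm := ah_exp_master y
  have h1 : Real.exp y ≤ 1 + y + 3 / (2 * (3 - y)) * y ^ 2 := by
    rw [div_mul_eq_mul_div, ← sub_nonneg]
    have : 1 + y + 3 * y ^ 2 / (2 * (3 - y)) - Real.exp y
        = ((y ^ 2 + 4 * y + 6) - 2 * Real.exp y * (3 - y)) / (2 * (3 - y)) := by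
      field_simp; ring
    rw [this]
    apply div_nonneg (by linarith) (by linarith)
  refine h1.trans ?_
  have : 3 / (2 * (3 - y)) ≤ 3 / (2 * (3 - c)) := by
    apply div_le_div_of_nonneg_left (by norm_num) (by linarith) (by linarith)
  nlinarith [sq_nonneg y]

/-- Quadratic bound solving: if `x² ≤ A + B x` with everything nonneg, `x ≤ √A + B`. -/
lemma ah_quad_solve {x A B : ℝ} (hx : 0 ≤ x) (hA : 0 ≤ A) (hB : 0 ≤ B)
    (h : x ^ 2 ≤ A + B * x) : x ≤ Real.sqrt A + B := by
  by_contra hcon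
  push_neg at hcon
  have hsA : Real.sqrt A ^ 2 = A := Real.sq_sqrt hA
  have h0 : 0 ≤ Real.sqrt A := Real.sqrt_nonneg A
  nlinarith

/-- Jensen for exp via shifting: `e^{∑ w x} ≤ ∑ w e^x` for prob weights. -/
lemma ah_exp_jensen {ι : Type*} (s : Finset ι) (w x : ι → ℝ) (hw : ∀ i ∈ s, 0 ≤ w i)
    (hw1 : ∑ i ∈ s, w i = 1) :
    Real.exp (∑ i ∈ s, w i * x i) ≤ ∑ i ∈ s, w i * Real.exp (x i) := by
  set c := ∑ i ∈ s, w i * x i with hc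
  have key : ∀ i ∈ s, w i * Real.exp c * (1 + (x i - c)) ≤ w i * Real.exp (x i) := by
    intro i hi
    have h1 : (1 + (x i - c)) ≤ Real.exp (x i - c) := by
      have := Real.add_one_le_exp (x i - c); linarith
    have : Real.exp c * (1 + (x i - c)) ≤ Real.exp c * Real.exp (x i - c) :=
      mul_le_mul_of_nonneg_left h1 (Real.exp_nonneg c)
    rw [← Real.exp_add] at this
    simp only [add_sub_cancel] at this
    calc w i * Real.exp c * (1 + (x i - c)) = w i * (Real.exp c * (1 + (x i - c))) := by ring
      _ ≤ w i * Real.exp (x i) := mul_le_mul_of_nonneg_left this (hw i hi)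
  calc Real.exp c
      = ∑ i ∈ s, w i * Real.exp c * (1 + (x i - c)) := by
        have e1 : ∑ i ∈ s, w i * Real.exp c * (1 + (x i - c))
            = ∑ i ∈ s, (Real.exp c * w i + Real.exp c * (w i * x i)
                - (Real.exp c * c) * w i) :=
          Finset.sum_congr rfl (fun i _ => by ring)
        rw [e1, Finset.sum_sub_distrib, Finset.sum_add_distrib, ← Finset.mul_sum,
          ← Finset.mul_sum, ← Finset.mul_sum, hw1, ← hc]
        ring
      _ ≤ ∑ i ∈ s, w i * Real.exp (x i) := Finset.sum_le_sum key

section AHBasic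

variable {K : ℕ} {l : ℕ → Fin K → ℝ}

lemma ah_logK_pos (hK : 2 ≤ K) : 0 < Real.log K := by
  apply Real.log_pos
  have : (2 : ℝ) ≤ (K : ℝ) := by exact_mod_cast hK
  linarith

lemma ah_nonempty (hK : 2 ≤ K) : Nonempty (Fin K) := ⟨⟨0, by omega⟩⟩

lemma ah_iInf_le (hK : 2 ≤ K) (f : Fin K → ℝ) (k : Fin K) : (⨅ j, f j) ≤ f k := by
  haveI := ah_nonempty hK
  exact ciInf_le (Finite.bddBelow_range f) k

lemma ah_le_iInf (hK : 2 ≤ K) (f : Fin K → ℝ) {c : ℝ} (h : ∀ j, c ≤ f j) :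
    c ≤ ⨅ j, f j := by
  haveI := ah_nonempty hK
  exact le_ciInf h

lemma ah_le_iSup (hK : 2 ≤ K) (f : Fin K → ℝ) (k : Fin K) : f k ≤ ⨆ j, f j := by
  haveI := ah_nonempty hK
  exact le_ciSup (Finite.bddAbove_range f) k

lemma ah_iSup_le (hK : 2 ≤ K) (f : Fin K → ℝ) {c : ℝ} (h : ∀ j, f j ≤ c) :
    (⨆ j, f j) ≤ c := by
  haveI := ah_nonempty hK
  exact ciSup_le h

lemma ah_exists_min (hK : 2 ≤ K) (f : Fin K → ℝ) :
    ∃ k, f k = (⨅ j, f j) ∧ ∀ j, f k ≤ f j := by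
  haveI := ah_nonempty hK
  obtain ⟨a, ha⟩ := Finite.exists_min f
  exact ⟨a, le_antisymm (le_ciInf ha) (ah_iInf_le hK f a), ha⟩

lemma ah_sup_sub_inf_nonneg (hK : 2 ≤ K) (f : Fin K → ℝ) :
    0 ≤ (⨆ j, f j) - (⨅ j, f j) := by
  have k : Fin K := ⟨0, by omega⟩
  have h1 := ah_iInf_le hK f k
  have h2 := ah_le_iSup hK f k
  linarith

open Classical in
lemma ah_weight_nonneg (Δ : ℝ) (t : ℕ) (k : Fin K) : 0 ≤ ahWeight K l Δ t k := by
  unfold ahWeight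
  split
  · apply div_nonneg (Real.exp_nonneg _)
    exact Finset.sum_nonneg fun j _ => Real.exp_nonneg _
  · split
    · positivity
    · exact le_refl 0

open Classical in
lemma ah_min_filter_pos (hK : 2 ≤ K) (t : ℕ) :
    0 < (Finset.univ.filter fun j : Fin K =>
      cumLoss K l t j = ⨅ j', cumLoss K l t j').card := by
  obtain ⟨k, hk, _⟩ := ah_exists_min hK (cumLoss K l t)
  exact Finset.card_pos.mpr ⟨k, by simp [hk]⟩

lemma ah_expsum_pos (hK : 2 ≤ K) (c : ℝ) (t : ℕ) :
    (0:ℝ) < ∑ j : Fin K, Real.exp (c * cumLoss K l t j) := by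
  haveI := ah_nonempty hK
  exact Finset.sum_pos (fun j _ => Real.exp_pos _) Finset.univ_nonempty

open Classical in
lemma ah_weight_sum (hK : 2 ≤ K) (Δ : ℝ) (t : ℕ) :
    ∑ k : Fin K, ahWeight K l Δ t k = 1 := by
  haveI := ah_nonempty hK
  unfold ahWeight
  split
  · rw [← Finset.sum_div]
    exact div_self (ne_of_gt (ah_expsum_pos hK _ t))
  · rw [Finset.sum_ite, Finset.sum_const_zero, add_zero, Finset.sum_const,
      nsmul_eq_mul]
    have hN := ah_min_filter_pos (l := l) hK t
    rw [mul_one_div, div_self]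
    exact_mod_cast Nat.pos_iff_ne_zero.mp hN

lemma ah_hedge_le_sup (hK : 2 ≤ K) (Δ : ℝ) (t : ℕ) :
    ahHedgeLoss K l Δ t ≤ ⨆ k, l t k := by
  unfold ahHedgeLoss
  calc ∑ k : Fin K, ahWeight K l Δ t k * l t k
      ≤ ∑ k : Fin K, ahWeight K l Δ t k * (⨆ j, l t j) := by
        apply Finset.sum_le_sum
        intro k _
        exact mul_le_mul_of_nonneg_left (ah_le_iSup hK (l t) k) (ah_weight_nonneg Δ t k)
    _ = 1 * (⨆ j, l t j) := by rw [← Finset.sum_mul, ah_weight_sum hK]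
    _ = ⨆ j, l t j := one_mul _

lemma ah_inf_le_hedge (hK : 2 ≤ K) (Δ : ℝ) (t : ℕ) :
    (⨅ k, l t k) ≤ ahHedgeLoss K l Δ t := by
  unfold ahHedgeLoss
  calc (⨅ j, l t j) = 1 * (⨅ j, l t j) := (one_mul _).symm
    _ = ∑ k : Fin K, ahWeight K l Δ t k * (⨅ j, l t j) := by
        rw [← Finset.sum_mul, ah_weight_sum hK]
    _ ≤ ∑ k : Fin K, ahWeight K l Δ t k * l t k := by
        apply Finset.sum_le_sum
        intro k _
        exact mul_le_mul_of_nonneg_left (ah_iInf_le hK (l t) k) (ah_weight_nonneg Δ t k)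

lemma ah_cumLoss_succ (t : ℕ) (k : Fin K) :
    cumLoss K l (t + 1) k = cumLoss K l t k + l t k := by
  unfold cumLoss
  exact Finset.sum_range_succ _ t

open Classical in
lemma ah_mix_le_hedge (hK : 2 ≤ K) (Δ : ℝ) (t : ℕ) :
    ahMixLoss K l Δ t ≤ ahHedgeLoss K l Δ t := by
  have hlogK := ah_logK_pos (K := K) hK
  unfold ahMixLoss
  split
  · next hΔ =>
    set h := ahHedgeLoss K l Δ t with hh
    set X := ∑ k : Fin K, ahWeight K l Δ t k * Real.exp (-(Real.log K / Δ) * l t k) with hX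
    have hXpos : 0 < X := by
      rw [hX]
      haveI := ah_nonempty (K := K) hK
      apply Finset.sum_pos _ Finset.univ_nonempty
      intro k _
      apply mul_pos _ (Real.exp_pos _)
      unfold ahWeight
      rw [if_pos hΔ]
      exact div_pos (Real.exp_pos _) (ah_expsum_pos hK _ t)
    have hjensen : Real.exp (-(Real.log K / Δ) * h) ≤ X := by
      have := ah_exp_jensen Finset.univ (fun k => ahWeight K l Δ t k)
        (fun k => -(Real.log K / Δ) * l t k)
        (fun k _ => ah_weight_nonneg Δ t k) (ah_weight_sum hK Δ t)
      have e : ∑ k : Fin K, ahWeight K l Δ t k * (-(Real.log K / Δ) * l t k)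
          = -(Real.log K / Δ) * h := by
        rw [hh]; unfold ahHedgeLoss
        rw [Finset.mul_sum]
        exact Finset.sum_congr rfl fun k _ => by ring
      rwa [e] at this
    have hlog : -(Real.log K / Δ) * h ≤ Real.log X :=
      (Real.le_log_iff_exp_le hXpos).mpr hjensen
    have hc : Δ / Real.log K * (Real.log K / Δ) = 1 := by
      field_simp
    have h2 := mul_le_mul_of_nonneg_left hlog (le_of_lt (div_pos hΔ hlogK))
    have e2 : Δ / Real.log K * (-(Real.log K / Δ) * h) = -h := by
      field_simp
    rw [e2] at h2
    linarith
  · next hΔ =>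
    set N := (Finset.univ.filter fun j : Fin K =>
      cumLoss K l t j = ⨅ j', cumLoss K l t j').card with hN
    have key : ∀ k : Fin K, ahWeight K l Δ t k *
        ((⨅ j, cumLoss K l (t+1) j) - ⨅ j, cumLoss K l t j) ≤
        ahWeight K l Δ t k * l t k := by
      intro k
      unfold ahWeight
      rw [if_neg hΔ]
      split
      · next hk =>
        apply mul_le_mul_of_nonneg_left _ (by positivity)
        have h1 : (⨅ j, cumLoss K l (t+1) j) ≤ cumLoss K l (t+1) k :=
          ah_iInf_le hK _ k
        rw [ah_cumLoss_succ, hk] at h1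
        linarith
      · simp
    calc (⨅ j, cumLoss K l (t+1) j) - ⨅ j, cumLoss K l t j
        = (∑ k : Fin K, ahWeight K l Δ t k) *
          ((⨅ j, cumLoss K l (t+1) j) - ⨅ j, cumLoss K l t j) := by
          rw [ah_weight_sum hK, one_mul]
      _ = ∑ k : Fin K, ahWeight K l Δ t k *
          ((⨅ j, cumLoss K l (t+1) j) - ⨅ j, cumLoss K l t j) := by
          rw [Finset.sum_mul]
      _ ≤ ∑ k : Fin K, ahWeight K l Δ t k * l t k :=
          Finset.sum_le_sum fun k _ => key k
      _ = ahHedgeLoss K l Δ t := rfl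

open Classical in
lemma ah_inf_le_mix (hK : 2 ≤ K) (Δ : ℝ) (t : ℕ) :
    (⨅ k, l t k) ≤ ahMixLoss K l Δ t := by
  have hlogK := ah_logK_pos (K := K) hK
  unfold ahMixLoss
  split
  · next hΔ =>
    set a := ⨅ k, l t k with ha
    set X := ∑ k : Fin K, ahWeight K l Δ t k * Real.exp (-(Real.log K / Δ) * l t k) with hX
    have hη : 0 < Real.log K / Δ := div_pos hlogK hΔ
    have hXpos : 0 < X := by
      rw [hX]
      haveI := ah_nonempty (K := K) hK
      apply Finset.sum_pos _ Finset.univ_nonempty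
      intro k _
      apply mul_pos _ (Real.exp_pos _)
      unfold ahWeight
      rw [if_pos hΔ]
      exact div_pos (Real.exp_pos _) (ah_expsum_pos hK _ t)
    have hXle : X ≤ Real.exp (-(Real.log K / Δ) * a) := by
      rw [hX]
      calc ∑ k : Fin K, ahWeight K l Δ t k * Real.exp (-(Real.log K / Δ) * l t k)
          ≤ ∑ k : Fin K, ahWeight K l Δ t k * Real.exp (-(Real.log K / Δ) * a) := by
            apply Finset.sum_le_sum
            intro k _
            apply mul_le_mul_of_nonneg_left _ (ah_weight_nonneg Δ t k)
            apply Real.exp_le_exp.mpr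
            have := ah_iInf_le hK (l t) k
            nlinarith
        _ = Real.exp (-(Real.log K / Δ) * a) := by
            rw [← Finset.sum_mul, ah_weight_sum hK, one_mul]
    have hlogX : Real.log X ≤ -(Real.log K / Δ) * a :=
      (Real.log_le_iff_le_exp hXpos).mpr hXle
    have h4 := mul_le_mul_of_nonneg_left hlogX (le_of_lt (div_pos hΔ hlogK))
    have e4 : Δ / Real.log K * (-(Real.log K / Δ) * a) = -a := by
      field_simp
    rw [e4] at h4
    linarith
  · next hΔ =>
    obtain ⟨k0, hk0, _⟩ := ah_exists_min hK (cumLoss K l (t+1))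
    have h1 : (⨅ j, cumLoss K l t j) ≤ cumLoss K l t k0 := ah_iInf_le hK _ k0
    have h2 : (⨅ j, l t j) ≤ l t k0 := ah_iInf_le hK _ k0
    have h3 := ah_cumLoss_succ (l := l) t k0
    rw [← hk0]
    linarith

lemma ah_delta_nonneg (hK : 2 ≤ K) (t : ℕ) : 0 ≤ ahDelta K l t := by
  induction t with
  | zero => exact le_refl 0
  | succ t ih =>
    have := ah_mix_le_hedge (l := l) hK (ahDelta K l t) t
    show (0:ℝ) ≤ ahDelta K l t + _
    linarith

lemma ah_delta_mono (hK : 2 ≤ K) : Monotone (ahDelta K l) := by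
  apply monotone_nat_of_le_succ
  intro t
  have := ah_mix_le_hedge (l := l) hK (ahDelta K l t) t
  show ahDelta K l t ≤ ahDelta K l t + _
  linarith

open Classical in
lemma ah_bernstein_aux (hK : 2 ≤ K) (t : ℕ) (Δ h m v s : ℝ)
    (hΔ : 0 ≤ Δ)
    (hh : ahHedgeLoss K l Δ t = h) (hm : ahMixLoss K l Δ t = m)
    (hv : ∑ k : Fin K, ahWeight K l Δ t k * (l t k - h) ^ 2 = v)
    (hs : (⨆ k, l t k) - (⨅ k, l t k) = s) :
    3 * ((h - m) * Δ) ≤ (3 / 2 * v + s * (h - m)) * Real.log K := by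
  have hlogK := ah_logK_pos (K := K) hK
  have hδ0 : 0 ≤ h - m := by
    have := ah_mix_le_hedge (l := l) hK Δ t
    rw [hh, hm] at this; linarith
  have hv0 : 0 ≤ v := by
    rw [← hv]
    exact Finset.sum_nonneg fun k _ => mul_nonneg (ah_weight_nonneg Δ t k) (sq_nonneg _)
  have hs0 : 0 ≤ s := by rw [← hs]; exact ah_sup_sub_inf_nonneg hK (l t)
  rcases eq_or_lt_of_le hΔ with hΔ0 | hΔpos
  · subst hΔ0
    have h6 := mul_nonneg hs0 hδ0
    have h5 : (0:ℝ) ≤ (3 / 2 * v + s * (h - m)) * Real.log K :=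
      mul_nonneg (by linarith) (le_of_lt hlogK)
    linarith
  · -- Δ > 0
    obtain ⟨η, hηdef⟩ : ∃ η, Real.log K / Δ = η := ⟨_, rfl⟩
    have hη : 0 < η := by rw [← hηdef]; exact div_pos hlogK hΔpos
    have hΔne : Δ ≠ 0 := ne_of_gt hΔpos
    have hlogKne : Real.log K ≠ 0 := ne_of_gt hlogK
    have hηΔ : η * Δ = Real.log K := by
      rw [← hηdef]; field_simp
    rcases le_or_gt 3 (η * s) with hbig | hsmall
    · -- trivial case: η s ≥ 3
      have h1 : 3 * ((h - m) * Δ) ≤ (η * s) * ((h - m) * Δ) :=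
        mul_le_mul_of_nonneg_right hbig (mul_nonneg hδ0 (le_of_lt hΔpos))
      have h2 : (η * s) * ((h - m) * Δ) = s * (h - m) * Real.log K := by
        rw [← hηΔ]; ring
      have h3 : 0 ≤ 3 / 2 * v * Real.log K := by positivity
      nlinarith
    · -- main case: η s < 3
      obtain ⟨c, hc⟩ : ∃ c, η * s = c := ⟨_, rfl⟩
      obtain ⟨CF, hCF⟩ : ∃ CF, 3 / (2 * (3 - c)) = CF := ⟨_, rfl⟩
      rw [hc] at hsmall
      have hc0 : 0 ≤ c := by rw [← hc]; exact mul_nonneg (le_of_lt hη) hs0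
      have h3c : 0 < 3 - c := by linarith
      have hwpos : ∀ k : Fin K, 0 < ahWeight K l Δ t k := by
        intro k
        unfold ahWeight
        rw [if_pos hΔpos]
        exact div_pos (Real.exp_pos _) (ah_expsum_pos hK _ t)
      have hinf_le : ∀ k, (⨅ j, l t j) ≤ l t k := fun k => ah_iInf_le hK (l t) k
      have hle_sup : ∀ k, l t k ≤ ⨆ j, l t j := fun k => ah_le_iSup hK (l t) k
      have hha : (⨅ j, l t j) ≤ h := by
        have := ah_inf_le_hedge (l := l) hK Δ t; rw [hh] at this; exact this
      have hhb : h ≤ ⨆ j, l t j := by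
        have := ah_hedge_le_sup (l := l) hK Δ t; rw [hh] at this; exact this
      have hhsum : ∑ k : Fin K, ahWeight K l Δ t k * l t k = h := hh
      obtain ⟨Y, hY⟩ : ∃ Y, ∑ k : Fin K, ahWeight K l Δ t k * Real.exp (η * (h - l t k)) = Y :=
        ⟨_, rfl⟩
      have hYpos : 0 < Y := by
        rw [← hY]
        haveI := ah_nonempty (K := K) hK
        exact Finset.sum_pos (fun k _ => mul_pos (hwpos k) (Real.exp_pos _))
          Finset.univ_nonempty
      have hYle : Y ≤ 1 + CF * (η ^ 2 * v) := by
        have pointwise : ∀ k : Fin K, ahWeight K l Δ t k * Real.exp (η * (h - l t k)) ≤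
            ahWeight K l Δ t k *
              (1 + η * (h - l t k) + CF * (η * (h - l t k)) ^ 2) := by
          intro k
          apply mul_le_mul_of_nonneg_left _ (le_of_lt (hwpos k))
          rw [← hCF]
          apply ah_exp_quad _ (by linarith : c < 3)
          have h1 : h - l t k ≤ s := by
            have := hinf_le k; rw [← hs]; linarith
          calc η * (h - l t k) ≤ η * s :=
                mul_le_mul_of_nonneg_left h1 (le_of_lt hη)
            _ = c := hc
        calc Y ≤ ∑ k : Fin K, ahWeight K l Δ t k *
              (1 + η * (h - l t k) + CF * (η * (h - l t k)) ^ 2) := by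
                rw [← hY]
                exact Finset.sum_le_sum fun k _ => pointwise k
          _ = (∑ k : Fin K, ahWeight K l Δ t k)
              + η * ((∑ k : Fin K, ahWeight K l Δ t k) * h
                  - ∑ k : Fin K, ahWeight K l Δ t k * l t k)
              + CF * (η ^ 2 * (∑ k : Fin K, ahWeight K l Δ t k * (l t k - h) ^ 2)) := by
            rw [Finset.mul_sum, Finset.sum_mul, ← Finset.sum_sub_distrib, Finset.mul_sum,
              Finset.mul_sum, ← Finset.sum_add_distrib, ← Finset.sum_add_distrib]
            exact Finset.sum_congr rfl fun k _ => by ring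
          _ = 1 + CF * (η ^ 2 * v) := by
            rw [ah_weight_sum hK, hv, hhsum]
            ring
      have hlogY : Real.log Y ≤ CF * (η ^ 2 * v) := by
        have := Real.log_le_sub_one_of_pos hYpos
        linarith
      obtain ⟨X, hX⟩ : ∃ X,
          ∑ k : Fin K, ahWeight K l Δ t k * Real.exp (-(Real.log K / Δ) * l t k) = X :=
        ⟨_, rfl⟩
      have hXY : X = Real.exp (-(η * h)) * Y := by
        rw [← hX, ← hY, Finset.mul_sum]
        apply Finset.sum_congr rfl
        intro k _
        rw [hηdef]
        rw [mul_comm (Real.exp (-(η * h))) _, mul_assoc, ← Real.exp_add]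
        congr 2
        ring
      have hXpos : 0 < X := by rw [hXY]; positivity
      have hlogX : Real.log X ≤ -(η * h) + CF * (η ^ 2 * v) := by
        rw [hXY, Real.log_mul (by positivity) (ne_of_gt hYpos), Real.log_exp]
        linarith
      have hmix : h - CF * (η * v) ≤ m := by
        have hmeq : m = -(Δ / Real.log K) * Real.log X := by
          rw [← hm]; unfold ahMixLoss; rw [if_pos hΔpos, hX]
        have hcoef : 0 ≤ Δ / Real.log K := le_of_lt (div_pos hΔpos hlogK)
        have h4 := mul_le_mul_of_nonneg_left hlogX hcoef
        have hcη : Δ / Real.log K * η = 1 := by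
          rw [← hηdef]; field_simp
        have e4 : Δ / Real.log K * (-(η * h) + CF * (η ^ 2 * v))
            = -h + CF * (η * v) := by
          linear_combination (CF * η * v - h) * hcη
        rw [e4] at h4
        rw [hmeq]
        linarith
      have hkey : (h - m) * (3 - c) ≤ 3 / 2 * (η * v) := by
        have hδle : h - m ≤ CF * (η * v) := by linarith
        have h7 := mul_le_mul_of_nonneg_right hδle (le_of_lt h3c)
        calc (h - m) * (3 - c) ≤ CF * (η * v) * (3 - c) := h7
          _ = 3 / 2 * (η * v) := by
            rw [← hCF]; field_simp
      rw [← hc] at hkey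
      rw [← hηΔ]
      nlinarith [mul_le_mul_of_nonneg_right hkey (le_of_lt hΔpos), hη, hv0]

lemma ah_bernstein (hK : 2 ≤ K) (t : ℕ) :
    3 * ((ahHedgeLoss K l (ahDelta K l t) t - ahMixLoss K l (ahDelta K l t) t)
        * ahDelta K l t) ≤
      (3 / 2 * (∑ k : Fin K, ahWeight K l (ahDelta K l t) t k *
          (l t k - ahHedgeLoss K l (ahDelta K l t) t) ^ 2)
        + ((⨆ k, l t k) - ⨅ k, l t k) *
          (ahHedgeLoss K l (ahDelta K l t) t - ahMixLoss K l (ahDelta K l t) t))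
      * Real.log K :=
  ah_bernstein_aux hK t _ _ _ _ _ (ah_delta_nonneg hK t) rfl rfl rfl rfl

open Classical in
/-- The AdaHedge potential function. -/
noncomputable def ahPhi (K : ℕ) (l : ℕ → Fin K → ℝ) (Δ : ℝ) (t : ℕ) : ℝ :=
  if 0 < Δ then
    -(Δ / Real.log K) *
      Real.log ((1 / K) * ∑ k : Fin K, Real.exp (-(Real.log K / Δ) * cumLoss K l t k))
  else ⨅ k, cumLoss K l t k

lemma ah_cumLoss_zero (k : Fin K) : cumLoss K l 0 k = 0 := by
  unfold cumLoss; simp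

open Classical in
lemma ah_phi_zero (hK : 2 ≤ K) (Δ : ℝ) : ahPhi K l Δ 0 = 0 := by
  haveI := ah_nonempty (K := K) hK
  have hKne : (K : ℝ) ≠ 0 := Nat.cast_ne_zero.mpr (by omega)
  unfold ahPhi
  split
  · have : ∀ k : Fin K, Real.exp (-(Real.log K / Δ) * cumLoss K l 0 k) = 1 := by
      intro k; rw [ah_cumLoss_zero]; simp
    rw [Finset.sum_congr rfl (fun k _ => this k)]
    rw [Finset.sum_const, Finset.card_univ, Fintype.card_fin, nsmul_eq_mul, mul_one]
    rw [one_div, inv_mul_cancel₀ hKne, Real.log_one, mul_zero]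
  · have : ∀ k : Fin K, cumLoss K l 0 k = 0 := ah_cumLoss_zero
    calc (⨅ k, cumLoss K l 0 k) = ⨅ _ : Fin K, (0:ℝ) := by
          simp only [this]
      _ = 0 := ciInf_const

open Classical in
lemma ah_mix_eq_phi (hK : 2 ≤ K) (Δ : ℝ) (t : ℕ) :
    ahMixLoss K l Δ t = ahPhi K l Δ (t + 1) - ahPhi K l Δ t := by
  have hlogK := ah_logK_pos (K := K) hK
  have hKne : (0:ℝ) < (K:ℝ) := by
    have : (2:ℝ) ≤ (K:ℝ) := by exact_mod_cast hK
    linarith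
  unfold ahMixLoss ahPhi
  split
  · next hΔ =>
    have hZ0 : (0:ℝ) < ∑ j : Fin K, Real.exp (-(Real.log K / Δ) * cumLoss K l t j) :=
      ah_expsum_pos hK _ t
    have hZ1 : (0:ℝ) < ∑ j : Fin K, Real.exp (-(Real.log K / Δ) * cumLoss K l (t+1) j) :=
      ah_expsum_pos hK _ (t+1)
    have e0 : ∀ k : Fin K, ahWeight K l Δ t k * Real.exp (-(Real.log K / Δ) * l t k)
        = Real.exp (-(Real.log K / Δ) * cumLoss K l (t+1) k) /
          (∑ j : Fin K, Real.exp (-(Real.log K / Δ) * cumLoss K l t j)) := by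
      intro k
      unfold ahWeight
      rw [if_pos hΔ, div_mul_eq_mul_div, ← Real.exp_add]
      congr 2
      rw [ah_cumLoss_succ]
      ring
    rw [Finset.sum_congr rfl (fun k _ => e0 k), ← Finset.sum_div,
      Real.log_div (ne_of_gt hZ1) (ne_of_gt hZ0)]
    rw [Real.log_mul (by positivity) (ne_of_gt hZ1),
      Real.log_mul (by positivity) (ne_of_gt hZ0)]
    ring
  · rfl

open Classical in
lemma ah_phi_mono (hK : 2 ≤ K) (t : ℕ) {Δ1 Δ2 : ℝ} (h1 : 0 ≤ Δ1) (h12 : Δ1 ≤ Δ2) :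
    ahPhi K l Δ1 t ≤ ahPhi K l Δ2 t := by
  have hlogK := ah_logK_pos (K := K) hK
  have hKpos : (0:ℝ) < (K:ℝ) := by
    have : (2:ℝ) ≤ (K:ℝ) := by exact_mod_cast hK
    linarith
  haveI := ah_nonempty (K := K) hK
  rcases eq_or_lt_of_le h1 with hΔ1z | hΔ1pos
  · -- Δ1 = 0
    rcases le_or_gt Δ2 0 with hΔ2z | hΔ2pos
    · have e1 : ¬ (0 < Δ1) := by linarith
      have e2 : ¬ (0 < Δ2) := by linarith
      unfold ahPhi
      rw [if_neg e1, if_neg e2]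
    · have e1 : ¬ (0 < Δ1) := by linarith
      unfold ahPhi
      rw [if_neg e1, if_pos hΔ2pos]
      -- show Lmin ≤ G(Δ2)
      set η := Real.log K / Δ2 with hηdef
      have hη : 0 < η := div_pos hlogK hΔ2pos
      set Lm := ⨅ k, cumLoss K l t k with hLm
      have hA : (1/(K:ℝ)) * ∑ j : Fin K, Real.exp (-η * cumLoss K l t j)
          ≤ Real.exp (-η * Lm) := by
        have : ∑ j : Fin K, Real.exp (-η * cumLoss K l t j)
            ≤ ∑ _j : Fin K, Real.exp (-η * Lm) := by
          apply Finset.sum_le_sum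
          intro j _
          apply Real.exp_le_exp.mpr
          have := ah_iInf_le hK (cumLoss K l t) j
          nlinarith
        rw [Finset.sum_const, Finset.card_univ, Fintype.card_fin, nsmul_eq_mul] at this
        rw [one_div]
        calc (K:ℝ)⁻¹ * ∑ j : Fin K, Real.exp (-η * cumLoss K l t j)
            ≤ (K:ℝ)⁻¹ * ((K:ℝ) * Real.exp (-η * Lm)) := by
              apply mul_le_mul_of_nonneg_left this (by positivity)
          _ = Real.exp (-η * Lm) := by field_simp
      have hApos : (0:ℝ) < (1/(K:ℝ)) * ∑ j : Fin K, Real.exp (-η * cumLoss K l t j) := by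
        have := ah_expsum_pos (l := l) hK (-η) t
        positivity
      have hlogA : Real.log ((1/(K:ℝ)) * ∑ j : Fin K, Real.exp (-η * cumLoss K l t j))
          ≤ -η * Lm := (Real.log_le_iff_le_exp hApos).mpr hA
      have h4 := mul_le_mul_of_nonneg_left hlogA (le_of_lt (div_pos hΔ2pos hlogK))
      have e4 : Δ2 / Real.log K * (-η * Lm) = -Lm := by
        rw [hηdef]; field_simp
      rw [e4] at h4
      linarith
  · -- 0 < Δ1 ≤ Δ2
    have hΔ2pos : 0 < Δ2 := lt_of_lt_of_le hΔ1pos h12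
    unfold ahPhi
    rw [if_pos hΔ1pos, if_pos hΔ2pos]
    set η1 := Real.log K / Δ1 with hη1
    set η2 := Real.log K / Δ2 with hη2
    set p := Δ2 / Δ1 with hp
    have hppos : 0 < p := div_pos hΔ2pos hΔ1pos
    have hp1 : 1 ≤ p := (one_le_div hΔ1pos).mpr h12
    set A1 := (1/(K:ℝ)) * ∑ j : Fin K, Real.exp (-η1 * cumLoss K l t j) with hA1
    set A2 := (1/(K:ℝ)) * ∑ j : Fin K, Real.exp (-η2 * cumLoss K l t j) with hA2
    have hA1pos : 0 < A1 := by
      have := ah_expsum_pos (l := l) hK (-η1) t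
      rw [hA1]; positivity
    have hA2pos : 0 < A2 := by
      have := ah_expsum_pos (l := l) hK (-η2) t
      rw [hA2]; positivity
    have hpow : A2 ^ p ≤ A1 := by
      have hmean := Real.rpow_arith_mean_le_arith_mean_rpow Finset.univ
        (fun _ : Fin K => 1/(K:ℝ)) (fun j : Fin K => Real.exp (-η2 * cumLoss K l t j))
        (fun i _ => by positivity)
        (by rw [Finset.sum_const, Finset.card_univ, Fintype.card_fin, nsmul_eq_mul]
            field_simp)
        (fun i _ => Real.exp_nonneg _) hp1
      have e5 : ∑ i : Fin K, 1/(K:ℝ) * Real.exp (-η2 * cumLoss K l t i) = A2 := by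
        rw [hA2, Finset.mul_sum]
      have e6 : ∀ i : Fin K, Real.exp (-η2 * cumLoss K l t i) ^ p
          = Real.exp (-η1 * cumLoss K l t i) := by
        intro i
        rw [← Real.exp_mul]
        congr 1
        rw [hη1, hη2, hp]
        field_simp
      rw [e5] at hmean
      calc A2 ^ p ≤ ∑ i : Fin K, 1/(K:ℝ) * Real.exp (-η2 * cumLoss K l t i) ^ p := hmean
        _ = A1 := by
          rw [hA1, Finset.mul_sum]
          exact Finset.sum_congr rfl fun i _ => by rw [e6]
    have hlogle : p * Real.log A2 ≤ Real.log A1 := by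
      have := Real.log_le_log (Real.rpow_pos_of_pos hA2pos p) hpow
      rwa [Real.log_rpow hA2pos] at this
    have h4 := mul_le_mul_of_nonpos_left hlogle
      (by
        have : 0 < Δ1 / Real.log K := div_pos hΔ1pos hlogK
        linarith : -(Δ1 / Real.log K) ≤ 0)
    have e7 : -(Δ1 / Real.log K) * (p * Real.log A2) = -(Δ2 / Real.log K) * Real.log A2 := by
      rw [hp]
      field_simp
    rw [e7] at h4
    exact h4

open Classical in
lemma ah_phi_le (hK : 2 ≤ K) (Δ : ℝ) (hΔ : 0 ≤ Δ) (t : ℕ) :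
    ahPhi K l Δ t ≤ (⨅ k, cumLoss K l t k) + Δ := by
  have hlogK := ah_logK_pos (K := K) hK
  have hKpos : (0:ℝ) < (K:ℝ) := by
    have : (2:ℝ) ≤ (K:ℝ) := by exact_mod_cast hK
    linarith
  haveI := ah_nonempty (K := K) hK
  unfold ahPhi
  split
  · next hΔpos =>
    set η := Real.log K / Δ with hηdef
    set Lm := ⨅ k, cumLoss K l t k with hLm
    obtain ⟨k0, hk0, _⟩ := ah_exists_min hK (cumLoss K l t)
    have hA : (1/(K:ℝ)) * Real.exp (-η * Lm)
        ≤ (1/(K:ℝ)) * ∑ j : Fin K, Real.exp (-η * cumLoss K l t j) := by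
      apply mul_le_mul_of_nonneg_left _ (by positivity)
      calc Real.exp (-η * Lm) = Real.exp (-η * cumLoss K l t k0) := by rw [hLm, ← hk0]
        _ ≤ ∑ j : Fin K, Real.exp (-η * cumLoss K l t j) :=
          Finset.single_le_sum (f := fun j : Fin K => Real.exp (-η * cumLoss K l t j))
            (fun j _ => Real.exp_nonneg _) (Finset.mem_univ k0)
    have hApos : (0:ℝ) < (1/(K:ℝ)) * ∑ j : Fin K, Real.exp (-η * cumLoss K l t j) := by
      have := ah_expsum_pos (l := l) hK (-η) t
      positivity
    have hlogA : Real.log ((1/(K:ℝ)) * Real.exp (-η * Lm))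
        ≤ Real.log ((1/(K:ℝ)) * ∑ j : Fin K, Real.exp (-η * cumLoss K l t j)) :=
      Real.log_le_log (by positivity) hA
    have e8 : Real.log ((1/(K:ℝ)) * Real.exp (-η * Lm)) = -Real.log K + (-η * Lm) := by
      rw [Real.log_mul (by positivity) (by positivity), Real.log_exp, one_div,
        Real.log_inv]
    rw [e8] at hlogA
    have h4 := mul_le_mul_of_nonpos_left hlogA
      (by
        have : 0 < Δ / Real.log K := div_pos hΔpos hlogK
        linarith : -(Δ / Real.log K) ≤ 0)
    have e9 : -(Δ / Real.log K) * (-Real.log K + -η * Lm) = Δ + Lm := by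
      rw [hηdef]
      field_simp
      ring
    rw [e9] at h4
    linarith
  · linarith

lemma ah_mixsum_le (hK : 2 ≤ K) (T : ℕ) :
    ∑ t ∈ Finset.range T, ahMixLoss K l (ahDelta K l t) t
      ≤ ahPhi K l (ahDelta K l T) T := by
  induction T with
  | zero =>
    rw [Finset.range_zero, Finset.sum_empty]
    show (0:ℝ) ≤ ahPhi K l (ahDelta K l 0) 0
    rw [ah_phi_zero hK]
  | succ T ih =>
    rw [Finset.sum_range_succ]
    have h1 := ah_mix_eq_phi (l := l) hK (ahDelta K l T) T
    have h2 := ah_phi_mono (l := l) hK (T + 1) (ah_delta_nonneg hK T)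
      (ah_delta_mono (l := l) hK (Nat.le_succ T))
    linarith

lemma ah_delta_eq_sum (T : ℕ) :
    ahDelta K l T = ∑ t ∈ Finset.range T,
      (ahHedgeLoss K l (ahDelta K l t) t - ahMixLoss K l (ahDelta K l t) t) := by
  induction T with
  | zero => rw [Finset.range_zero, Finset.sum_empty]; rfl
  | succ T ih =>
    rw [Finset.sum_range_succ, ← ih]
    rfl

lemma ah_hedge_sum_le (hK : 2 ≤ K) (T : ℕ) :
    ∑ t ∈ Finset.range T, ahHedgeLoss K l (ahDelta K l t) t
      ≤ (⨅ k, cumLoss K l T k) + 2 * ahDelta K l T := by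
  have h1 := ah_mixsum_le (l := l) hK T
  have h2 := ah_phi_le (l := l) hK (ahDelta K l T) (ah_delta_nonneg hK T) T
  have h3 := ah_delta_eq_sum (l := l) (K := K) T
  have h4 : ∑ t ∈ Finset.range T, ahHedgeLoss K l (ahDelta K l t) t
      = ∑ t ∈ Finset.range T, ahMixLoss K l (ahDelta K l t) t + ahDelta K l T := by
    rw [h3, ← Finset.sum_add_distrib]
    exact Finset.sum_congr rfl fun t _ => by ring
  linarith

open Classical in
lemma ah_bhatia (hK : 2 ≤ K) (t : ℕ) (Δ h v : ℝ)
    (hh : ahHedgeLoss K l Δ t = h)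
    (hv : ∑ k : Fin K, ahWeight K l Δ t k * (l t k - h) ^ 2 = v) :
    v ≤ ((⨆ k, l t k) - h) * (h - ⨅ k, l t k) := by
  obtain ⟨a, ha⟩ : ∃ a, (⨅ k, l t k) = a := ⟨_, rfl⟩
  obtain ⟨b, hb⟩ : ∃ b, (⨆ k, l t k) = b := ⟨_, rfl⟩
  rw [ha, hb]
  have hinf : ∀ k, a ≤ l t k := fun k => ha ▸ ah_iInf_le hK (l t) k
  have hsup : ∀ k, l t k ≤ b := fun k => hb ▸ ah_le_iSup hK (l t) k
  have hhsum : ∑ k : Fin K, ahWeight K l Δ t k * l t k = h := hh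
  have hsum1 : ∑ k : Fin K, ahWeight K l Δ t k = 1 := ah_weight_sum hK Δ t
  have key : v + ∑ k : Fin K, ahWeight K l Δ t k * ((b - l t k) * (l t k - a))
      = (b - h) * (h - a) := by
    rw [← hv, ← Finset.sum_add_distrib]
    have e : ∀ k : Fin K, ahWeight K l Δ t k * (l t k - h) ^ 2
        + ahWeight K l Δ t k * ((b - l t k) * (l t k - a))
        = ahWeight K l Δ t k * (h ^ 2 - a * b)
          + (ahWeight K l Δ t k * l t k) * (a + b - 2 * h) := by
      intro k; ring
    rw [Finset.sum_congr rfl (fun k _ => e k), Finset.sum_add_distrib,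
      ← Finset.sum_mul, ← Finset.sum_mul, hhsum, hsum1]
    ring
  have hnn : 0 ≤ ∑ k : Fin K, ahWeight K l Δ t k * ((b - l t k) * (l t k - a)) :=
    Finset.sum_nonneg fun k _ => mul_nonneg (ah_weight_nonneg Δ t k)
      (mul_nonneg (by linarith [hsup k]) (by linarith [hinf k]))
  linarith

lemma ah_step_aux (hK : 2 ≤ K) (t : ℕ) (Δ h m v s : ℝ) (hΔ : 0 ≤ Δ)
    (hh : ahHedgeLoss K l Δ t = h) (hm : ahMixLoss K l Δ t = m)
    (hv : ∑ k : Fin K, ahWeight K l Δ t k * (l t k - h) ^ 2 = v)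
    (hs : (⨆ k, l t k) - (⨅ k, l t k) = s) :
    (Δ + (h - m)) ^ 2 ≤ Δ ^ 2 + v * Real.log K
      + (2 / 3 * Real.log K + 1) * (s * (h - m)) := by
  have hbern := ah_bernstein_aux hK t Δ h m v s hΔ hh hm hv hs
  have hδ0 : 0 ≤ h - m := by
    have := ah_mix_le_hedge (l := l) hK Δ t
    rw [hh, hm] at this; linarith
  have hδs : h - m ≤ s := by
    have h1 := ah_hedge_le_sup (l := l) hK Δ t
    have h2 := ah_inf_le_mix (l := l) hK Δ t
    rw [hh] at h1; rw [hm] at h2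
    rw [← hs]; linarith
  have hδ2 : (h - m) ^ 2 ≤ s * (h - m) := by nlinarith
  nlinarith

/-- The per-round variance of AdaHedge. -/
noncomputable def ahV (K : ℕ) (l : ℕ → Fin K → ℝ) (t : ℕ) : ℝ :=
  ∑ k : Fin K, ahWeight K l (ahDelta K l t) t k *
    (l t k - ahHedgeLoss K l (ahDelta K l t) t) ^ 2

lemma ah_step (hK : 2 ≤ K) (t : ℕ) :
    ahDelta K l (t + 1) ^ 2 ≤ ahDelta K l t ^ 2 + ahV K l t * Real.log K
      + (2 / 3 * Real.log K + 1) * (((⨆ k, l t k) - ⨅ k, l t k) *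
          (ahHedgeLoss K l (ahDelta K l t) t - ahMixLoss K l (ahDelta K l t) t)) :=
  ah_step_aux hK t _ _ _ _ _ (ah_delta_nonneg hK t) rfl rfl rfl rfl

lemma ah_delta_sq_le (hK : 2 ≤ K) (T : ℕ) :
    ahDelta K l T ^ 2 ≤ (∑ t ∈ Finset.range T, ahV K l t) * Real.log K
      + (2 / 3 * Real.log K + 1) * ∑ t ∈ Finset.range T,
          ((⨆ k, l t k) - ⨅ k, l t k) *
            (ahHedgeLoss K l (ahDelta K l t) t - ahMixLoss K l (ahDelta K l t) t) := by
  induction T with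
  | zero => simp [ahDelta]
  | succ T ih =>
    have hstep := ah_step (l := l) hK T
    rw [Finset.sum_range_succ, Finset.sum_range_succ]
    have : ahDelta K l (T + 1) ^ 2 ≤ ahDelta K l T ^ 2 + ahV K l T * Real.log K
        + (2 / 3 * Real.log K + 1) * (((⨆ k, l T k) - ⨅ k, l T k) *
            (ahHedgeLoss K l (ahDelta K l T) T - ahMixLoss K l (ahDelta K l T) T)) := hstep
    nlinarith [this, ih]

lemma ah_sdelta_sum_le (hK : 2 ≤ K) (T : ℕ) (S : ℝ)
    (hS : ∀ t ∈ Finset.range T, (⨆ k, l t k) - (⨅ k, l t k) ≤ S) :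
    ∑ t ∈ Finset.range T,
        ((⨆ k, l t k) - ⨅ k, l t k) *
          (ahHedgeLoss K l (ahDelta K l t) t - ahMixLoss K l (ahDelta K l t) t)
      ≤ S * ahDelta K l T := by
  rw [ah_delta_eq_sum (l := l) (K := K) T, Finset.mul_sum]
  apply Finset.sum_le_sum
  intro t ht
  apply mul_le_mul_of_nonneg_right (hS t ht)
  have := ah_mix_le_hedge (l := l) hK (ahDelta K l t) t
  linarith

lemma ah_cs_agg (T : ℕ) (x s : ℕ → ℝ) (S : ℝ)
    (hx0 : ∀ t ∈ Finset.range T, 0 ≤ x t) (hxs : ∀ t ∈ Finset.range T, x t ≤ s t)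
    (hsS : ∀ t ∈ Finset.range T, s t ≤ S) (hS0 : 0 ≤ S)
    (hP : 0 < ∑ t ∈ Finset.range T, s t) :
    ∑ t ∈ Finset.range T, x t * (s t - x t)
      ≤ S * ((∑ t ∈ Finset.range T, x t) * ∑ t ∈ Finset.range T, (s t - x t))
        / ∑ t ∈ Finset.range T, s t := by
  obtain ⟨P, hPdef⟩ : ∃ P, ∑ t ∈ Finset.range T, s t = P := ⟨_, rfl⟩
  obtain ⟨A, hAdef⟩ : ∃ A, ∑ t ∈ Finset.range T, x t = A := ⟨_, rfl⟩
  obtain ⟨Q, hQdef⟩ : ∃ Q, ∑ t ∈ Finset.range T, x t ^ 2 / s t = Q := ⟨_, rfl⟩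
  rw [hPdef, hAdef]
  rw [hPdef] at hP
  -- Cauchy–Schwarz : A^2 ≤ P * Q
  have hCS : A ^ 2 ≤ P * Q := by
    have := Finset.sum_mul_sq_le_sq_mul_sq (Finset.range T)
      (fun t => Real.sqrt (s t)) (fun t => x t / Real.sqrt (s t))
    have e1 : ∀ t ∈ Finset.range T, Real.sqrt (s t) * (x t / Real.sqrt (s t)) = x t := by
      intro t ht
      rcases eq_or_lt_of_le (le_trans (hx0 t ht) (hxs t ht)) with h0 | hpos
      · have hx : x t = 0 := le_antisymm (by rw [h0]; exact hxs t ht) (hx0 t ht)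
        rw [hx]; simp
      · rw [mul_div_assoc']  -- √s * x / √s
        rw [mul_comm, mul_div_assoc, div_self (by positivity), mul_one]
    have e2 : ∀ t ∈ Finset.range T, Real.sqrt (s t) ^ 2 = s t := by
      intro t ht
      exact Real.sq_sqrt (le_trans (hx0 t ht) (hxs t ht))
    have e3 : ∀ t ∈ Finset.range T, (x t / Real.sqrt (s t)) ^ 2 = x t ^ 2 / s t := by
      intro t ht
      rw [div_pow, Real.sq_sqrt (le_trans (hx0 t ht) (hxs t ht))]
    rw [Finset.sum_congr rfl e1, Finset.sum_congr rfl e2, Finset.sum_congr rfl e3,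
      hAdef, hQdef, hPdef] at this
    exact this
  -- per-term bound
  have hterm : ∀ t ∈ Finset.range T, x t * (s t - x t) ≤ S * (x t - x t ^ 2 / s t) := by
    intro t ht
    rcases eq_or_lt_of_le (le_trans (hx0 t ht) (hxs t ht)) with h0 | hpos
    · have hx : x t = 0 := le_antisymm (by rw [h0]; exact hxs t ht) (hx0 t ht)
      rw [hx]; simp
    · have hsne : s t ≠ 0 := ne_of_gt hpos
      have e : x t - x t ^ 2 / s t = x t * (s t - x t) / s t := by
        field_simp
      rw [e]
      have hq0 : 0 ≤ x t * (s t - x t) / s t := by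
        apply div_nonneg _ (le_of_lt hpos)
        exact mul_nonneg (hx0 t ht) (by linarith [hxs t ht])
      calc x t * (s t - x t) = s t * (x t * (s t - x t) / s t) := by
            field_simp
        _ ≤ S * (x t * (s t - x t) / s t) :=
            mul_le_mul_of_nonneg_right (hsS t ht) hq0
  have hsum1 : ∑ t ∈ Finset.range T, x t * (s t - x t)
      ≤ S * (A - Q) := by
    calc ∑ t ∈ Finset.range T, x t * (s t - x t)
        ≤ ∑ t ∈ Finset.range T, S * (x t - x t ^ 2 / s t) :=
          Finset.sum_le_sum hterm
      _ = S * (A - Q) := by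
          rw [← Finset.mul_sum, Finset.sum_sub_distrib, hAdef, hQdef]
  have hsub : ∑ t ∈ Finset.range T, (s t - x t) = P - A := by
    rw [Finset.sum_sub_distrib, hPdef, hAdef]
  rw [hsub]
  rw [le_div_iff₀ hP]
  nlinarith

end AHBasic

set_option maxHeartbeats 1000000 in
/-- **AdaHedge regret bound** (equation (3.2)): with `H^{(T)}` the cumulative hedge
loss of AdaHedge, `L_*^{(T)}` the cumulative loss of the best expert, `L_+^{(T)}`
and `L_−^{(T)}` the cumulative maximal and minimal per-round losses, and `S^{(T)}`
the largest per-round loss range,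
`H^{(T)} ≤ L_* + 2·√(S·ln K·(L_+ − L_*)(L_* − L_−)/(L_+ − L_−)) + S·((16/3)·ln K + 2)`
(the fraction being `0` when `L_+ = L_−`, as is Lean's division convention). -/
theorem adahedge_regret_bound
    (K T : ℕ) (hK : 2 ≤ K) (hT : 1 ≤ T)
    (l : ℕ → Fin K → ℝ) (hl : ∀ t k, 0 ≤ l t k)
    (H Lstar Lplus Lminus S : ℝ)
    (hH : H = ∑ t ∈ Finset.range T, ahHedgeLoss K l (ahDelta K l t) t)
    (hLstar : Lstar = ⨅ k, cumLoss K l T k)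
    (hLplus : Lplus = ∑ t ∈ Finset.range T, ⨆ k, l t k)
    (hLminus : Lminus = ∑ t ∈ Finset.range T, ⨅ k, l t k)
    (hS : S = (Finset.range T).sup'
        (Finset.nonempty_range_iff.mpr (by omega))
        (fun t => (⨆ k, l t k) - ⨅ k, l t k)) :
    H ≤ Lstar +
      2 * Real.sqrt (S * Real.log K *
        ((Lplus - Lstar) * (Lstar - Lminus) / (Lplus - Lminus))) +
      S * (16 / 3 * Real.log K + 2) := by
  have hlogK := ah_logK_pos (K := K) hK
  have hsq := Real.sqrt_nonneg (S * Real.log K *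
    ((Lplus - Lstar) * (Lstar - Lminus) / (Lplus - Lminus)))
  have hs_le_S : ∀ t ∈ Finset.range T, (⨆ k, l t k) - (⨅ k, l t k) ≤ S := by
    intro t ht
    rw [hS]
    exact Finset.le_sup' (fun t => (⨆ k, l t k) - ⨅ k, l t k) ht
  have hS0 : 0 ≤ S := by
    have h0T : (0:ℕ) ∈ Finset.range T := Finset.mem_range.mpr (by omega)
    have h1 := hs_le_S 0 h0T
    have h2 := ah_sup_sub_inf_nonneg hK (l 0)
    linarith
  obtain ⟨Δ, hΔdef⟩ : ∃ D, ahDelta K l T = D := ⟨_, rfl⟩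
  have hΔ0 : 0 ≤ Δ := hΔdef ▸ ah_delta_nonneg hK T
  have hHle : H ≤ Lstar + 2 * Δ := by
    rw [hH, hLstar, ← hΔdef]
    exact ah_hedge_sum_le hK T
  obtain ⟨V, hVdef⟩ : ∃ V, ∑ t ∈ Finset.range T, ahV K l t = V := ⟨_, rfl⟩
  have hq : Δ ^ 2 ≤ V * Real.log K + (2 / 3 * Real.log K + 1) * (S * Δ) := by
    have h1 := ah_delta_sq_le (l := l) hK T
    have h2 := ah_sdelta_sum_le (l := l) hK T S hs_le_S
    rw [hΔdef, hVdef] at h1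
    rw [hΔdef] at h2
    have hC0 : (0:ℝ) ≤ 2 / 3 * Real.log K + 1 := by linarith
    nlinarith [mul_le_mul_of_nonneg_left h2 hC0]
  have hLmLs : Lminus ≤ Lstar := by
    rw [hLstar, hLminus]
    apply ah_le_iInf hK
    intro j
    have e : cumLoss K l T j = ∑ t ∈ Finset.range T, l t j := rfl
    rw [e]
    exact Finset.sum_le_sum fun t _ => ah_iInf_le hK (l t) j
  have hLsLp : Lstar ≤ Lplus := by
    rw [hLstar, hLplus]
    have k0 : Fin K := ⟨0, by omega⟩
    calc (⨅ k, cumLoss K l T k) ≤ cumLoss K l T k0 := ah_iInf_le hK _ k0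
      _ = ∑ t ∈ Finset.range T, l t k0 := rfl
      _ ≤ ∑ t ∈ Finset.range T, ⨆ k, l t k :=
        Finset.sum_le_sum fun t _ => ah_le_iSup hK (l t) k0
  rcases le_or_gt H Lstar with hR | hR
  · -- regret nonpositive: trivial
    have h1 : 0 ≤ S * (16 / 3 * Real.log K + 2) :=
      mul_nonneg hS0 (by linarith)
    linarith
  · rcases eq_or_lt_of_le (le_trans hLmLs hLsLp) with hPL | hPL
    · -- Lplus = Lminus : all ranges are zero
      have hssum : ∑ t ∈ Finset.range T, ((⨆ k, l t k) - ⨅ k, l t k) = 0 := by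
        rw [Finset.sum_sub_distrib, ← hLplus, ← hLminus]; linarith
      have hzero : ∀ t ∈ Finset.range T, (⨆ k, l t k) - (⨅ k, l t k) = 0 :=
        (Finset.sum_eq_zero_iff_of_nonneg
          (fun t _ => ah_sup_sub_inf_nonneg hK (l t))).mp hssum
      have hVle : V ≤ 0 := by
        rw [← hVdef]
        apply Finset.sum_nonpos
        intro t ht
        have hb := ah_bhatia (l := l) hK t (ahDelta K l t)
          (ahHedgeLoss K l (ahDelta K l t) t) (ahV K l t) rfl rfl
        have h1 : (⨅ k, l t k) ≤ ahHedgeLoss K l (ahDelta K l t) t :=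
          ah_inf_le_hedge hK _ t
        have h2 : ahHedgeLoss K l (ahDelta K l t) t ≤ ⨆ k, l t k :=
          ah_hedge_le_sup hK _ t
        have h3 := hzero t ht
        nlinarith [hb]
      have hΔle : Δ ≤ (2 / 3 * Real.log K + 1) * S := by
        have hq' : Δ ^ 2 ≤ 0 + ((2 / 3 * Real.log K + 1) * S) * Δ := by
          nlinarith [hq, hVle, hlogK]
        have hB0 : 0 ≤ (2 / 3 * Real.log K + 1) * S :=
          mul_nonneg (by linarith) hS0
        have := ah_quad_solve hΔ0 (le_refl 0) hB0 hq'
        rwa [Real.sqrt_zero, zero_add] at this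
      have h4 : 0 ≤ S * Real.log K := mul_nonneg hS0 (le_of_lt hlogK)
      linarith
    · -- main case : Lminus < Lplus
      have hPpos : 0 < Lplus - Lminus := by linarith
      have hVb : V ≤ S * ((H - Lminus) * (Lplus - H)) / (Lplus - Lminus) := by
        have hagg := ah_cs_agg T
          (fun t => ahHedgeLoss K l (ahDelta K l t) t - ⨅ k, l t k)
          (fun t => (⨆ k, l t k) - ⨅ k, l t k) S
          (fun t _ => by
            show 0 ≤ ahHedgeLoss K l (ahDelta K l t) t - ⨅ k, l t k
            have := ah_inf_le_hedge (l := l) hK (ahDelta K l t) t; linarith)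
          (fun t _ => by
            show ahHedgeLoss K l (ahDelta K l t) t - (⨅ k, l t k)
              ≤ (⨆ k, l t k) - ⨅ k, l t k
            have := ah_hedge_le_sup (l := l) hK (ahDelta K l t) t; linarith)
          hs_le_S hS0
          (by rw [Finset.sum_sub_distrib, ← hLplus, ← hLminus]; linarith)
        have ex : ∑ t ∈ Finset.range T,
            (ahHedgeLoss K l (ahDelta K l t) t - ⨅ k, l t k) = H - Lminus := by
          rw [Finset.sum_sub_distrib, ← hH, ← hLminus]
        have exs : ∑ t ∈ Finset.range T,
            (((⨆ k, l t k) - ⨅ k, l t k)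
              - (ahHedgeLoss K l (ahDelta K l t) t - ⨅ k, l t k)) = Lplus - H := by
          have e : ∀ t ∈ Finset.range T,
              ((⨆ k, l t k) - ⨅ k, l t k)
                - (ahHedgeLoss K l (ahDelta K l t) t - ⨅ k, l t k)
              = (⨆ k, l t k) - ahHedgeLoss K l (ahDelta K l t) t := by
            intro t _; ring
          rw [Finset.sum_congr rfl e, Finset.sum_sub_distrib, ← hLplus, ← hH]
        rw [ex, exs] at hagg
        have ePsum : ∑ t ∈ Finset.range T, ((⨆ k, l t k) - ⨅ k, l t k)
            = Lplus - Lminus := by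
          rw [Finset.sum_sub_distrib, ← hLplus, ← hLminus]
        rw [ePsum] at hagg
        calc V = ∑ t ∈ Finset.range T, ahV K l t := hVdef.symm
          _ ≤ ∑ t ∈ Finset.range T,
              (ahHedgeLoss K l (ahDelta K l t) t - ⨅ k, l t k) *
                (((⨆ k, l t k) - ⨅ k, l t k)
                  - (ahHedgeLoss K l (ahDelta K l t) t - ⨅ k, l t k)) := by
            apply Finset.sum_le_sum
            intro t _
            have hb := ah_bhatia (l := l) hK t (ahDelta K l t)
              (ahHedgeLoss K l (ahDelta K l t) t) (ahV K l t) rfl rfl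
            nlinarith [hb]
          _ ≤ S * ((H - Lminus) * (Lplus - H)) / (Lplus - Lminus) := hagg
      have halg : S * ((H - Lminus) * (Lplus - H)) / (Lplus - Lminus)
          ≤ S * ((Lplus - Lstar) * (Lstar - Lminus) / (Lplus - Lminus))
            + S * (H - Lstar) := by
        rw [div_le_iff₀ hPpos]
        have e : (S * ((Lplus - Lstar) * (Lstar - Lminus) / (Lplus - Lminus))
            + S * (H - Lstar)) * (Lplus - Lminus)
            = S * ((Lplus - Lstar) * (Lstar - Lminus))
              + S * (H - Lstar) * (Lplus - Lminus) := by
          field_simp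
        rw [e]
        have hprod : (H - Lminus) * (Lplus - H)
            ≤ (Lplus - Lstar) * (Lstar - Lminus) + (H - Lstar) * (Lplus - Lminus) := by
          have p1 : 0 ≤ (H - Lstar) * (Lstar - Lminus) :=
            mul_nonneg (le_of_lt (sub_pos.mpr hR)) (sub_nonneg.mpr hLmLs)
          have p2 : 0 ≤ (H - Lstar) ^ 2 := sq_nonneg _
          linarith only [p1, p2]
        linarith only [mul_le_mul_of_nonneg_left hprod hS0]
      have hq2 : Δ ^ 2 ≤ S * Real.log K *
          ((Lplus - Lstar) * (Lstar - Lminus) / (Lplus - Lminus))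
          + ((8 / 3 * Real.log K + 1) * S) * Δ := by
        have hVb2 : V ≤ S * ((Lplus - Lstar) * (Lstar - Lminus) / (Lplus - Lminus))
            + S * (H - Lstar) := le_trans hVb halg
        have h5 : V * Real.log K ≤ (S * ((Lplus - Lstar) * (Lstar - Lminus)
            / (Lplus - Lminus)) + S * (H - Lstar)) * Real.log K :=
          mul_le_mul_of_nonneg_right hVb2 (le_of_lt hlogK)
        have h6 : S * (H - Lstar) ≤ S * (2 * Δ) :=
          mul_le_mul_of_nonneg_left (by linarith) hS0
        have h7 : S * (H - Lstar) * Real.log K ≤ S * (2 * Δ) * Real.log K :=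
          mul_le_mul_of_nonneg_right h6 (le_of_lt hlogK)
        linarith only [hq, h5, h7]
      have hA0 : 0 ≤ S * Real.log K *
          ((Lplus - Lstar) * (Lstar - Lminus) / (Lplus - Lminus)) := by
        apply mul_nonneg (mul_nonneg hS0 (le_of_lt hlogK))
        apply div_nonneg (mul_nonneg (by linarith) (by linarith)) (by linarith)
      have hB0 : 0 ≤ (8 / 3 * Real.log K + 1) * S :=
        mul_nonneg (by linarith) hS0
      have hfin := ah_quad_solve hΔ0 hA0 hB0 hq2
      linarith only [hfin, hHle]
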